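/- Let n ≥ 1 and let Δ = (δ₁, δ₂, δ₃, δ₄) be a quadruple of vectors in ℤⁿ with δ₁ + δ₂ + δ₃ + δ₄ = 0. Then there exists a constant ε = ε(Δ) ≥ 0 with the following property: for all pairwise distinct α₁, α₂, α₃ ∈ ℂ and all κ with κ_j ∈ ℂ∖{0}, setting S = ℂ∖{α₁,α₂,α₃} and f : S → (ℂ∖{0})ⁿ, f(z)_j = κ_j ∏_{i=1}^{3}(z−α_i)^{−δ_i^j}, there exist v ∈ ℝⁿ, a real number l ≥ 0, and a partition {1,2,3,4} = {a,b} ⊔ {c,d} into two pairs such that, with w = v + l·(δ_c + δ_d) and Γ = {v + t·δ_a : t ≥ 0} ∪ {v + t·δ_b : t ≥ 0} ∪ {v + t·(δ_c + δ_d) : t ∈ [0,l]} ∪ {w + t·δ_c : t ≥ 0} ∪ {w + t·δ_d : t ≥ 0}, both Log(f(S)) ⊆ U_ε(Γ) and Γ ⊆ U_ε(Log(f(S))). -/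

import Mathlib

/-- Coordinate-wise logarithm of moduli, `Log(z)_i = log |z_i|`. -/
noncomputable def LogMap {n : ℕ} (z : Fin n → ℂ) : Fin n → ℝ :=
  fun i => Real.log ‖z i‖

/-- Open ε-neighbourhood of a set with respect to the sup norm on `Fin n → ℝ`. -/
def nbhd {n : ℕ} (ε : ℝ) (X : Set (Fin n → ℝ)) : Set (Fin n → ℝ) :=
  {y | ∃ x ∈ X, ‖y - x‖ < ε}

/-- Ray emanating from `v` in direction `d`. -/
def ray {n : ℕ} (v d : Fin n → ℝ) : Set (Fin n → ℝ) :=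
  {x | ∃ t : ℝ, 0 ≤ t ∧ x = v + t • d}

/-- Segment from `v` in direction `d` of parameter length `l`. -/
def seg {n : ℕ} (v d : Fin n → ℝ) (l : ℝ) : Set (Fin n → ℝ) :=
  {x | ∃ t : ℝ, 0 ≤ t ∧ t ≤ l ∧ x = v + t • d}

/-- Real vector obtained from an integer vector. -/
def intCast {n : ℕ} (d : Fin n → ℤ) : Fin n → ℝ := fun i => (d i : ℝ)

/-- Image of a tropical rational curve with four ends of directions `δ a, δ b, δ c, δ d`:
two vertices `v` and `w = v + l • (δ c + δ d)` joined by a bounded edge, with the rays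
`δ a, δ b` at `v` and the rays `δ c, δ d` at `w`. -/
noncomputable def fourEndCurve {n : ℕ} (δ : Fin 4 → Fin n → ℤ) (a b c d : Fin 4)
    (v : Fin n → ℝ) (l : ℝ) : Set (Fin n → ℝ) :=
  ray v (intCast (δ a)) ∪ ray v (intCast (δ b)) ∪
    seg v (intCast (δ c + δ d)) l ∪
    ray (v + l • intCast (δ c + δ d)) (intCast (δ c)) ∪
    ray (v + l • intCast (δ c + δ d)) (intCast (δ d))

set_option maxHeartbeats 1000000

/-- the complex absolute value, as an absolute value (removed from Mathlib). -/
noncomputable def Complex.abs : AbsoluteValue ℂ ℝ := NormedField.toAbsoluteValue ℂ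

lemma Complex.abs_ofReal (r : ℝ) : Complex.abs (r : ℂ) = |r| := Complex.norm_real r

/-- `|log r - log s| ≤ 3` when `r, s` agree within a factor of 8. -/
lemma lc {r s : ℝ} (hr : 0 < r) (hs : 0 < s) (h1 : r ≤ 8*s) (h2 : s ≤ 8*r) :
    |Real.log r - Real.log s| ≤ 3 := by
  have h8 : Real.log 8 ≤ 3 := by
    have : (8:ℝ) = 2^3 := by norm_num
    rw [this, Real.log_pow]; push_cast
    nlinarith [Real.log_two_lt_d9]
  have e1 : Real.log r ≤ Real.log 8 + Real.log s := by
    rw [← Real.log_mul (by norm_num) hs.ne']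
    exact Real.log_le_log hr h1
  have e2 : Real.log s ≤ Real.log 8 + Real.log r := by
    rw [← Real.log_mul (by norm_num) hr.ne']
    exact Real.log_le_log hs h2
  rw [abs_le]; constructor <;> linarith

lemma univ3 {p q m : Fin 3} (hpq : p ≠ q) (hpm : p ≠ m) (hqm : q ≠ m) :
    (Finset.univ : Finset (Fin 3)) = {p, q, m} := by
  symm
  apply Finset.eq_univ_of_card
  rw [Finset.card_insert_of_notMem (by simp [hpq, hpm]),
    Finset.card_insert_of_notMem (by simp [hqm]), Finset.card_singleton]
  simp

lemma sum3 {M : Type*} [AddCommMonoid M] {p q m : Fin 3} (hpq : p ≠ q) (hpm : p ≠ m)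
    (hqm : q ≠ m) (g : Fin 3 → M) : ∑ i, g i = g p + g q + g m := by
  rw [univ3 hpq hpm hqm, Finset.sum_insert (by simp [hpq, hpm]),
    Finset.sum_insert (by simp [hqm]), Finset.sum_singleton, ← add_assoc]

lemma mem3 {p q m : Fin 3} (hpq : p ≠ q) (hpm : p ≠ m) (hqm : q ≠ m) (i : Fin 3) :
    i = p ∨ i = q ∨ i = m := by
  have h := Finset.mem_univ i
  rw [univ3 hpq hpm hqm] at h
  simpa using h

/-- triangle inequality for `Complex.abs` of differences -/
lemma tri (x y w : ℂ) : Complex.abs (x - y) ≤ Complex.abs (x - w) + Complex.abs (w - y) :=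
  Complex.abs.sub_le x w y

lemma absc (x y : ℂ) : Complex.abs (x - y) = Complex.abs (y - x) := by
  rw [← AbsoluteValue.map_neg Complex.abs]; ring_nf

lemma nz {z w : ℂ} (h : 0 < Complex.abs (z - w)) : z ≠ w := by
  intro he; rw [he, sub_self] at h; simp at h

lemma zcalc (u w : ℂ) (c : ℝ) :
    Complex.abs (w + (c:ℂ)*(u - w) - w) = |c| * Complex.abs (u - w) ∧
    Complex.abs (w + (c:ℂ)*(u - w) - u) = |1 - c| * Complex.abs (u - w) := by
  constructor
  · rw [show w + (c:ℂ)*(u - w) - w = (c:ℂ)*(u - w) by ring, map_mul, Complex.abs_ofReal]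
  · rw [show w + (c:ℂ)*(u - w) - u = ((c - 1:ℝ):ℂ)*(u - w) by push_cast; ring, map_mul,
      Complex.abs_ofReal, abs_sub_comm]

/-- description of the points of the tropical curve in the log-coordinates of the
three punctures: five pieces (ray to `μ`, ray to `∞`, bounded edge, ray to `β`, ray to `γ`). -/
def PieceSpec (d R gp gq gm : ℝ) : Prop :=
  (∃ t, 0 ≤ t ∧ gp = Real.log R ∧ gq = Real.log R ∧ gm = Real.log R - t) ∨
  (∃ t, 0 ≤ t ∧ gp = Real.log R + t ∧ gq = Real.log R + t ∧ gm = Real.log R + t) ∨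
  (∃ t, 0 ≤ t ∧ t ≤ Real.log R - Real.log d ∧
    gp = Real.log R - t ∧ gq = Real.log R - t ∧ gm = Real.log R) ∨
  (∃ t, 0 ≤ t ∧ gp = Real.log d - t ∧ gq = Real.log d ∧ gm = Real.log R) ∨
  (∃ t, 0 ≤ t ∧ gp = Real.log d ∧ gq = Real.log d - t ∧ gm = Real.log R)

lemma fwd_real {d R e rp rq rm : ℝ}
    (hd : 0 < d) (hR : 0 < R) (he : 0 < e)
    (hdR : d ≤ R) (hde : d ≤ e) (heRd : e ≤ R + d) (hRed : R ≤ e + d)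
    (hrp : 0 < rp) (hrq : 0 < rq) (hrm : 0 < rm)
    (t1 : rp ≤ rq + d) (t2 : rq ≤ rp + d) (t3 : d ≤ rp + rq)
    (t4 : rp ≤ rm + R) (t5 : rm ≤ rp + R) (t6 : R ≤ rp + rm)
    (t7 : rq ≤ rm + e) (t8 : rm ≤ rq + e) (t9 : e ≤ rq + rm) :
    ∃ gp gq gm : ℝ, PieceSpec d R gp gq gm ∧
      |Real.log rp - gp| ≤ 3 ∧ |Real.log rq - gq| ≤ 3 ∧ |Real.log rm - gm| ≤ 3 := by
  by_cases hA : rp < d/2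
  · refine ⟨Real.log rp, Real.log d, Real.log R,
      Or.inr (Or.inr (Or.inr (Or.inl ⟨Real.log d - Real.log rp, ?_, by ring, rfl, rfl⟩))),
      by norm_num, lc hrq hd (by linarith) (by linarith), lc hrm hR (by linarith) (by linarith)⟩
    have := Real.log_le_log hrp (show rp ≤ d by linarith)
    linarith
  by_cases hB : rq < d/2
  · refine ⟨Real.log d, Real.log rq, Real.log R,
      Or.inr (Or.inr (Or.inr (Or.inr ⟨Real.log d - Real.log rq, ?_, rfl, by ring, rfl⟩))),
      lc hrp hd (by linarith) (by linarith), by norm_num,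
      lc hrm hR (by linarith) (by linarith)⟩
    have := Real.log_le_log hrq (show rq ≤ d by linarith)
    linarith
  push_neg at hA hB
  by_cases hC : rm < R/2
  · refine ⟨Real.log R, Real.log R, Real.log rm,
      Or.inl ⟨Real.log R - Real.log rm, ?_, rfl, rfl, by ring⟩,
      lc hrp hR (by linarith) (by linarith), lc hrq hR (by linarith) (by linarith),
      by norm_num⟩
    have := Real.log_le_log hrm (show rm ≤ R by linarith)
    linarith
  push_neg at hC
  by_cases hD : 2*R < rp
  · refine ⟨Real.log rp, Real.log rp, Real.log rp,
      Or.inr (Or.inl ⟨Real.log rp - Real.log R, ?_, by ring, by ring, by ring⟩),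
      by norm_num, lc hrq hrp (by linarith) (by linarith),
      lc hrm hrp (by linarith) (by linarith)⟩
    have := Real.log_le_log hR (show R ≤ rp by linarith)
    linarith
  push_neg at hD
  -- middle region : near the bounded edge
  have hs : 0 < min R (max rp d) := lt_min hR (lt_of_lt_of_le hd (le_max_right rp d))
  have hs2 : min R (max rp d) ≤ 2*rp :=
    le_trans (min_le_right _ _) (max_le (by linarith) (by linarith))
  have hs1 : rp ≤ 2 * min R (max rp d) := by
    have hmin : min R rp ≤ min R (max rp d) :=
      le_min (min_le_left R rp) (le_trans (min_le_right R rp) (le_max_left rp d))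
    rcases le_total R rp with h | h
    · rw [min_eq_left h] at hmin; linarith
    · rw [min_eq_right h] at hmin; linarith
  have hsd : d ≤ min R (max rp d) := le_min hdR (le_max_right rp d)
  have hsR : min R (max rp d) ≤ R := min_le_left _ _
  refine ⟨Real.log (min R (max rp d)), Real.log (min R (max rp d)), Real.log R,
    Or.inr (Or.inr (Or.inl ⟨Real.log R - Real.log (min R (max rp d)), ?_, ?_, by ring,
      by ring, rfl⟩)),
    lc hrp hs (by linarith) (by linarith), lc hrq hs (by linarith) (by linarith),
    lc hrm hR (by linarith) (by linarith)⟩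
  · have := Real.log_le_log hs hsR
    linarith
  · have := Real.log_le_log hd hsd
    linarith

lemma bwd_real (β γ μ : ℂ) (hβγ : β ≠ γ) (hβμ : β ≠ μ) (hγμ : γ ≠ μ)
    (hmin1 : Complex.abs (β - γ) ≤ Complex.abs (β - μ))
    (hmin2 : Complex.abs (β - γ) ≤ Complex.abs (γ - μ))
    (gp gq gm : ℝ)
    (hpiece : PieceSpec (Complex.abs (β - γ)) (Complex.abs (β - μ)) gp gq gm) :
    ∃ z : ℂ, z ≠ β ∧ z ≠ γ ∧ z ≠ μ ∧
      |Real.log (Complex.abs (z - β)) - gp| ≤ 3 ∧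
      |Real.log (Complex.abs (z - γ)) - gq| ≤ 3 ∧
      |Real.log (Complex.abs (z - μ)) - gm| ≤ 3 := by
  have hd : 0 < Complex.abs (β - γ) := Complex.abs.pos (sub_ne_zero.mpr hβγ)
  have hR : 0 < Complex.abs (β - μ) := Complex.abs.pos (sub_ne_zero.mpr hβμ)
  have he : 0 < Complex.abs (γ - μ) := Complex.abs.pos (sub_ne_zero.mpr hγμ)
  have hRed : Complex.abs (β - μ) ≤ Complex.abs (β - γ) + Complex.abs (γ - μ) := tri β μ γ
  have heRd : Complex.abs (γ - μ) ≤ Complex.abs (β - γ) + Complex.abs (β - μ) := by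
    have h1 := tri γ μ β
    have h2 := absc γ β
    linarith
  rcases hpiece with ⟨t, ht, rfl, rfl, rfl⟩ | ⟨t, ht, rfl, rfl, rfl⟩ |
    ⟨t, ht, htl, rfl, rfl, rfl⟩ | ⟨t, ht, rfl, rfl, rfl⟩ | ⟨t, ht, rfl, rfl, rfl⟩
  · -- P1 : ray towards μ
    set c := Real.exp (-t) / 4 with hc
    have hc0 : 0 < c := by positivity
    have hc4 : c ≤ 1/4 := by
      have h1 : Real.exp (-t) ≤ 1 := Real.exp_le_one_iff.mpr (by linarith)
      rw [hc]; linarith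
    set z := μ + (c:ℂ) * (β - μ) with hzdef
    have hzm : Complex.abs (z - μ) = c * Complex.abs (β - μ) := by
      rw [hzdef, (zcalc β μ c).1, abs_of_pos hc0]
    have hzb : Complex.abs (z - β) = (1 - c) * Complex.abs (β - μ) := by
      rw [hzdef, (zcalc β μ c).2, abs_of_pos (show (0:ℝ) < 1 - c by linarith)]
    have hq1 : Complex.abs (z - γ) ≤ Complex.abs (z - μ) + Complex.abs (γ - μ) := by
      have h1 := tri z γ μ
      have h2 := absc μ γ
      linarith
    have hq2 : Complex.abs (γ - μ) ≤ Complex.abs (z - γ) + Complex.abs (z - μ) := by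
      have h1 := tri γ μ z
      have h2 := absc γ z
      linarith
    have hcR : c * Complex.abs (β - μ) ≤ Complex.abs (β - μ)/4 := by nlinarith [hR.le]
    have hcR0 : 0 ≤ c * Complex.abs (β - μ) := by positivity
    have hrp_lb : 3/4 * Complex.abs (β - μ) ≤ Complex.abs (z - β) := by
      rw [hzb]; nlinarith [hR.le]
    have hrp_ub : Complex.abs (z - β) ≤ Complex.abs (β - μ) := by
      rw [hzb]; nlinarith [hR.le]
    have hrm_ub : Complex.abs (z - μ) ≤ Complex.abs (β - μ)/4 := by rw [hzm]; linarith
    have hrm_pos : 0 < Complex.abs (z - μ) := by rw [hzm]; positivity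
    have hrq_lb : Complex.abs (β - μ)/4 ≤ Complex.abs (z - γ) := by linarith
    have hrq_ub : Complex.abs (z - γ) ≤ 3 * Complex.abs (β - μ) := by linarith
    have hrp_pos : 0 < Complex.abs (z - β) := by linarith
    have hrq_pos : 0 < Complex.abs (z - γ) := by linarith
    refine ⟨z, nz hrp_pos, nz hrq_pos, nz hrm_pos,
      lc hrp_pos hR (by linarith) (by linarith),
      lc hrq_pos hR (by linarith) (by linarith), ?_⟩
    have hlog : Real.log (Complex.abs (β - μ)) - t
        = Real.log (Complex.abs (β - μ) * Real.exp (-t)) := by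
      rw [Real.log_mul hR.ne' (Real.exp_ne_zero _), Real.log_exp]; ring
    rw [hlog]
    have hs0 : 0 < Complex.abs (β - μ) * Real.exp (-t) := by positivity
    have hseq : c * Complex.abs (β - μ) = (Complex.abs (β - μ) * Real.exp (-t))/4 := by
      rw [hc]; ring
    apply lc hrm_pos hs0
    · rw [hzm, hseq]; linarith
    · rw [hzm, hseq]; linarith
  · -- P2 : ray towards ∞
    set c := 4 * Real.exp t with hc
    have hc0 : 0 < c := by positivity
    have hc4 : 4 ≤ c := by
      have h1 : 1 ≤ Real.exp t := Real.one_le_exp ht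
      rw [hc]; linarith
    set z := μ + ((-c : ℝ):ℂ) * (β - μ) with hzdef
    have hzm : Complex.abs (z - μ) = c * Complex.abs (β - μ) := by
      rw [hzdef, (zcalc β μ (-c)).1, abs_neg, abs_of_pos hc0]
    have hzb : Complex.abs (z - β) = (1 + c) * Complex.abs (β - μ) := by
      rw [hzdef, (zcalc β μ (-c)).2, abs_of_pos (show (0:ℝ) < 1 - (-c) by linarith)]
      ring
    have hq1 : Complex.abs (z - γ) ≤ Complex.abs (z - μ) + Complex.abs (γ - μ) := by
      have h1 := tri z γ μ
      have h2 := absc μ γ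
      linarith
    have hq2 : Complex.abs (z - μ) ≤ Complex.abs (z - γ) + Complex.abs (γ - μ) := by
      have h1 := tri z μ γ
      linarith
    have hseq : c * Complex.abs (β - μ) = 4 * (Complex.abs (β - μ) * Real.exp t) := by
      rw [hc]; ring
    have hs0 : 0 < Complex.abs (β - μ) * Real.exp t := by positivity
    have hRs : Complex.abs (β - μ) ≤ Complex.abs (β - μ) * Real.exp t := by
      nlinarith [mul_le_mul_of_nonneg_left (Real.one_le_exp ht) hR.le]
    have hrm_pos : 0 < Complex.abs (z - μ) := by rw [hzm]; positivity
    have hrp_bounds : 4 * (Complex.abs (β - μ) * Real.exp t) ≤ Complex.abs (z - β) ∧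
        Complex.abs (z - β) ≤ 5 * (Complex.abs (β - μ) * Real.exp t) := by
      constructor <;> [skip; skip] <;> rw [hzb] <;> nlinarith [hR.le]
    have hrq_lb : 2 * (Complex.abs (β - μ) * Real.exp t) ≤ Complex.abs (z - γ) := by
      have := hzm
      nlinarith [hq2]
    have hrq_ub : Complex.abs (z - γ) ≤ 6 * (Complex.abs (β - μ) * Real.exp t) := by
      nlinarith [hq1, hzm]
    have hrp_pos : 0 < Complex.abs (z - β) := by nlinarith [hrp_bounds.1]
    have hrq_pos : 0 < Complex.abs (z - γ) := by nlinarith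
    have hlog : Real.log (Complex.abs (β - μ)) + t
        = Real.log (Complex.abs (β - μ) * Real.exp t) := by
      rw [Real.log_mul hR.ne' (Real.exp_ne_zero _), Real.log_exp]
    rw [hlog]
    refine ⟨z, nz hrp_pos, nz hrq_pos, nz hrm_pos,
      lc hrp_pos hs0 (by nlinarith [hrp_bounds.2]) (by nlinarith [hrp_bounds.1]),
      lc hrq_pos hs0 (by linarith) (by linarith),
      lc hrm_pos hs0 (by rw [hzm, hseq]; linarith) (by rw [hzm, hseq]; linarith)⟩
  · -- P3 : bounded edge
    have hρ0 : 0 < Complex.abs (β - μ) * Real.exp (-t) := by positivity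
    have hρR : Complex.abs (β - μ) * Real.exp (-t) ≤ Complex.abs (β - μ) := by
      nlinarith [Real.exp_le_one_iff.mpr (show -t ≤ 0 by linarith), hR.le,
        Real.exp_pos (-t)]
    have hρd : Complex.abs (β - γ) ≤ Complex.abs (β - μ) * Real.exp (-t) := by
      have h1 : Real.exp (Real.log (Complex.abs (β - γ)))
          ≤ Real.exp (Real.log (Complex.abs (β - μ)) - t) := Real.exp_le_exp.mpr (by linarith)
      rw [Real.exp_log hd, Real.exp_sub, Real.exp_log hR] at h1
      have h2 : Complex.abs (β - μ) / Real.exp t = Complex.abs (β - μ) * Real.exp (-t) := by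
        rw [Real.exp_neg, div_eq_mul_inv]
      linarith
    have hlog : Real.log (Complex.abs (β - μ)) - t
        = Real.log (Complex.abs (β - μ) * Real.exp (-t)) := by
      rw [Real.log_mul hR.ne' (Real.exp_ne_zero _), Real.log_exp]; ring
    rw [hlog]
    by_cases hshort : Complex.abs (β - μ) ≤ 2 * Complex.abs (β - γ)
    · -- short edge : place z at the quarter point towards β from μ
      set z := μ + ((1/4 : ℝ):ℂ) * (β - μ) with hzdef
      have hzm : Complex.abs (z - μ) = 1/4 * Complex.abs (β - μ) := by
        rw [hzdef, (zcalc β μ (1/4)).1, abs_of_pos (by norm_num : (0:ℝ) < 1/4)]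
      have hzb : Complex.abs (z - β) = 3/4 * Complex.abs (β - μ) := by
        rw [hzdef, (zcalc β μ (1/4)).2, show |1 - (1/4:ℝ)| = 3/4 by norm_num]
      have hq1 : Complex.abs (z - γ) ≤ Complex.abs (z - μ) + Complex.abs (γ - μ) := by
        have h1 := tri z γ μ
        have h2 := absc μ γ
        linarith
      have hq2 : Complex.abs (γ - μ) ≤ Complex.abs (z - γ) + Complex.abs (z - μ) := by
        have h1 := tri γ μ z
        have h2 := absc γ z
        linarith
      have hrp_pos : 0 < Complex.abs (z - β) := by rw [hzb]; positivity
      have hrm_pos : 0 < Complex.abs (z - μ) := by rw [hzm]; positivity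
      have hrq_lb : Complex.abs (β - μ)/4 ≤ Complex.abs (z - γ) := by
        rw [hzm] at hq2; linarith
      have hrq_pos : 0 < Complex.abs (z - γ) := by linarith
      refine ⟨z, nz hrp_pos, nz hrq_pos, nz hrm_pos,
        lc hrp_pos hρ0 (by rw [hzb]; linarith) (by rw [hzb]; linarith),
        lc hrq_pos hρ0 (by rw [hzm] at hq1; linarith) (by linarith),
        lc hrm_pos hR (by rw [hzm]; linarith) (by rw [hzm]; linarith)⟩
    · -- long edge
      push_neg at hshort
      set ρ' := max (Complex.abs (β - μ) * Real.exp (-t)) (2 * Complex.abs (β - γ)) with hρ'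
      have hρ'0 : 0 < ρ' := lt_of_lt_of_le hρ0 (le_max_left _ _)
      have hρ'ρ : Complex.abs (β - μ) * Real.exp (-t) ≤ ρ' := le_max_left _ _
      have hρ'2ρ : ρ' ≤ 2 * (Complex.abs (β - μ) * Real.exp (-t)) :=
        max_le (by linarith) (by linarith)
      have hρ'R : ρ' ≤ Complex.abs (β - μ) := max_le hρR (by linarith)
      have hρ'D : 2 * Complex.abs (β - γ) ≤ ρ' := le_max_right _ _
      set c' := ρ' / Complex.abs (β - μ) with hc'
      have hc'0 : 0 < c' := div_pos hρ'0 hR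
      set z := β + ((-c' : ℝ):ℂ) * (μ - β) with hzdef
      have hzb : Complex.abs (z - β) = ρ' := by
        rw [hzdef, (zcalc μ β (-c')).1, abs_neg, abs_of_pos hc'0, absc μ β, hc']
        field_simp
      have hzm : Complex.abs (z - μ) = Complex.abs (β - μ) + ρ' := by
        rw [hzdef, (zcalc μ β (-c')).2,
          abs_of_pos (show (0:ℝ) < 1 - (-c') by linarith), absc μ β, hc']
        field_simp; ring
      have hq1 : Complex.abs (z - β) ≤ Complex.abs (z - γ) + Complex.abs (β - γ) := by
        have h1 := tri z β γ
        have h2 := absc γ β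
        linarith
      have hq2 : Complex.abs (z - γ) ≤ Complex.abs (z - β) + Complex.abs (β - γ) := tri z γ β
      have hrp_pos : 0 < Complex.abs (z - β) := by rw [hzb]; exact hρ'0
      have hrm_pos : 0 < Complex.abs (z - μ) := by rw [hzm]; linarith
      have hrq_lb : ρ'/2 ≤ Complex.abs (z - γ) := by rw [hzb] at hq1; linarith
      have hrq_pos : 0 < Complex.abs (z - γ) := by linarith
      refine ⟨z, nz hrp_pos, nz hrq_pos, nz hrm_pos,
        lc hrp_pos hρ0 (by rw [hzb]; linarith) (by rw [hzb]; linarith),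
        lc hrq_pos hρ0 (by rw [hzb] at hq2; linarith) (by linarith),
        lc hrm_pos hR (by rw [hzm]; linarith) (by rw [hzm]; linarith)⟩
  · -- P4 : ray towards β
    set c := Real.exp (-t) / 4 with hc
    have hc0 : 0 < c := by positivity
    have hc4 : c ≤ 1/4 := by
      have h1 : Real.exp (-t) ≤ 1 := Real.exp_le_one_iff.mpr (by linarith)
      rw [hc]; linarith
    set z := β + (c:ℂ) * (γ - β) with hzdef
    have hzb : Complex.abs (z - β) = c * Complex.abs (β - γ) := by
      rw [hzdef, (zcalc γ β c).1, abs_of_pos hc0, absc γ β]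
    have hzg : Complex.abs (z - γ) = (1 - c) * Complex.abs (β - γ) := by
      rw [hzdef, (zcalc γ β c).2, abs_of_pos (show (0:ℝ) < 1 - c by linarith), absc γ β]
    have hcD : c * Complex.abs (β - γ) ≤ Complex.abs (β - γ)/4 := by nlinarith [hd.le]
    have hcD0 : 0 < c * Complex.abs (β - γ) := by positivity
    have hm1 : Complex.abs (z - μ) ≤ Complex.abs (z - β) + Complex.abs (β - μ) := tri z μ β
    have hm2 : Complex.abs (β - μ) ≤ Complex.abs (z - β) + Complex.abs (z - μ) := by
      have h1 := tri β μ z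
      have h2 := absc β z
      linarith
    have hrp_pos : 0 < Complex.abs (z - β) := by rw [hzb]; exact hcD0
    have hrq_lb : 3/4 * Complex.abs (β - γ) ≤ Complex.abs (z - γ) := by
      rw [hzg]; nlinarith [hd.le]
    have hrq_ub : Complex.abs (z - γ) ≤ Complex.abs (β - γ) := by
      rw [hzg]; nlinarith [hd.le]
    have hrq_pos : 0 < Complex.abs (z - γ) := by linarith
    have hrm_lb : 3/4 * Complex.abs (β - μ) ≤ Complex.abs (z - μ) := by
      rw [hzb] at hm2; linarith
    have hrm_ub : Complex.abs (z - μ) ≤ 2 * Complex.abs (β - μ) := by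
      rw [hzb] at hm1; linarith
    have hrm_pos : 0 < Complex.abs (z - μ) := by linarith
    have hs0 : 0 < Complex.abs (β - γ) * Real.exp (-t) := by positivity
    have hseq : c * Complex.abs (β - γ) = (Complex.abs (β - γ) * Real.exp (-t))/4 := by
      rw [hc]; ring
    have hlog : Real.log (Complex.abs (β - γ)) - t
        = Real.log (Complex.abs (β - γ) * Real.exp (-t)) := by
      rw [Real.log_mul hd.ne' (Real.exp_ne_zero _), Real.log_exp]; ring
    rw [hlog]
    exact ⟨z, nz hrp_pos, nz hrq_pos, nz hrm_pos,
      lc hrp_pos hs0 (by rw [hzb, hseq]; linarith) (by rw [hzb, hseq]; linarith),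
      lc hrq_pos hd (by linarith) (by linarith),
      lc hrm_pos hR (by linarith) (by linarith)⟩
  · -- P5 : ray towards γ
    set c := Real.exp (-t) / 4 with hc
    have hc0 : 0 < c := by positivity
    have hc4 : c ≤ 1/4 := by
      have h1 : Real.exp (-t) ≤ 1 := Real.exp_le_one_iff.mpr (by linarith)
      rw [hc]; linarith
    set z := γ + (c:ℂ) * (β - γ) with hzdef
    have hzg : Complex.abs (z - γ) = c * Complex.abs (β - γ) := by
      rw [hzdef, (zcalc β γ c).1, abs_of_pos hc0]
    have hzb : Complex.abs (z - β) = (1 - c) * Complex.abs (β - γ) := by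
      rw [hzdef, (zcalc β γ c).2, abs_of_pos (show (0:ℝ) < 1 - c by linarith)]
    have hcD : c * Complex.abs (β - γ) ≤ Complex.abs (β - γ)/4 := by nlinarith [hd.le]
    have hcD0 : 0 < c * Complex.abs (β - γ) := by positivity
    have hm1 : Complex.abs (z - μ) ≤ Complex.abs (z - γ) + Complex.abs (γ - μ) := tri z μ γ
    have hm2 : Complex.abs (γ - μ) ≤ Complex.abs (z - γ) + Complex.abs (z - μ) := by
      have h1 := tri γ μ z
      have h2 := absc γ z
      linarith
    have hrq_pos : 0 < Complex.abs (z - γ) := by rw [hzg]; exact hcD0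
    have hrp_lb : 3/4 * Complex.abs (β - γ) ≤ Complex.abs (z - β) := by
      rw [hzb]; nlinarith [hd.le]
    have hrp_ub : Complex.abs (z - β) ≤ Complex.abs (β - γ) := by
      rw [hzb]; nlinarith [hd.le]
    have hrp_pos : 0 < Complex.abs (z - β) := by linarith
    have hrm_lb : Complex.abs (β - μ)/4 ≤ Complex.abs (z - μ) := by
      -- rm ≥ e - cD ≥ e - e/4 = (3/4) e ≥ (3/8) R
      rw [hzg] at hm2; linarith
    have hrm_ub : Complex.abs (z - μ) ≤ 3 * Complex.abs (β - μ) := by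
      rw [hzg] at hm1; linarith
    have hrm_pos : 0 < Complex.abs (z - μ) := by linarith
    have hs0 : 0 < Complex.abs (β - γ) * Real.exp (-t) := by positivity
    have hseq : c * Complex.abs (β - γ) = (Complex.abs (β - γ) * Real.exp (-t))/4 := by
      rw [hc]; ring
    have hlog : Real.log (Complex.abs (β - γ)) - t
        = Real.log (Complex.abs (β - γ) * Real.exp (-t)) := by
      rw [Real.log_mul hd.ne' (Real.exp_ne_zero _), Real.log_exp]; ring
    rw [hlog]
    exact ⟨z, nz hrp_pos, nz hrq_pos, nz hrm_pos,
      lc hrp_pos hd (by linarith) (by linarith),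
      lc hrq_pos hs0 (by rw [hzg, hseq]; linarith) (by rw [hzg, hseq]; linarith),
      lc hrm_pos hR (by linarith) (by linarith)⟩

lemma log_expand {n : ℕ} (κ : Fin n → ℂ) (hκ : ∀ j, κ j ≠ 0) (δ : Fin 4 → Fin n → ℤ)
    (α : Fin 3 → ℂ) (z : ℂ) (hz : ∀ i, z ≠ α i) (j : Fin n) :
    Real.log (Complex.abs (κ j * ∏ i : Fin 3, (z - α i) ^ (-(δ i.castSucc j)))) =
      Real.log (Complex.abs (κ j)) +
        ∑ i : Fin 3, (-(δ i.castSucc j) : ℝ) * Real.log (Complex.abs (z - α i)) := by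
  have hne : ∀ i : Fin 3, (z - α i) ≠ 0 := fun i => sub_ne_zero.mpr (hz i)
  rw [map_mul, map_prod]
  rw [Real.log_mul (by simpa using hκ j) (by
    apply Finset.prod_ne_zero_iff.mpr
    intro i _
    rw [map_zpow₀]
    exact zpow_ne_zero _ ((map_ne_zero Complex.abs).mpr (hne i)))]
  rw [Real.log_prod (by
    intro i _
    rw [map_zpow₀]
    exact zpow_ne_zero _ ((map_ne_zero Complex.abs).mpr (hne i)))]
  congr 1
  apply Finset.sum_congr rfl
  intro i _
  rw [map_zpow₀, Real.log_zpow]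
  push_cast
  ring

lemma main_aux {n : ℕ} (δ : Fin 4 → Fin n → ℤ)
    (hΔ : δ 0 + δ 1 + δ 2 + δ 3 = 0)
    (p q m : Fin 3) (hpq : p ≠ q) (hpm : p ≠ m) (hqm : q ≠ m)
    (α : Fin 3 → ℂ) (hα : Function.Injective α)
    (hmin1 : Complex.abs (α p - α q) ≤ Complex.abs (α p - α m))
    (hmin2 : Complex.abs (α p - α q) ≤ Complex.abs (α q - α m))
    (κ : Fin n → ℂ) (hκ : ∀ j, κ j ≠ 0) :
    ∃ (v : Fin n → ℝ) (l : ℝ) (a b c d : Fin 4),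
        0 ≤ l ∧
        a ≠ b ∧ a ≠ c ∧ a ≠ d ∧ b ≠ c ∧ b ≠ d ∧ c ≠ d ∧
        LogMap '' ((fun z : ℂ => fun j : Fin n =>
              κ j * ∏ i : Fin 3, (z - α i) ^ (-(δ i.castSucc j))) ''
            {z : ℂ | ∀ i, z ≠ α i})
          ⊆ nbhd (9 * (∑ i : Fin 4, ∑ j, |(δ i j : ℝ)|) + 1) (fourEndCurve δ a b c d v l) ∧
        fourEndCurve δ a b c d v l
          ⊆ nbhd (9 * (∑ i : Fin 4, ∑ j, |(δ i j : ℝ)|) + 1)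
            (LogMap '' ((fun z : ℂ => fun j : Fin n =>
              κ j * ∏ i : Fin 3, (z - α i) ^ (-(δ i.castSucc j))) ''
            {z : ℂ | ∀ i, z ≠ α i})) := by
  have hβγ : α p ≠ α q := fun h => hpq (hα h)
  have hβμ : α p ≠ α m := fun h => hpm (hα h)
  have hγμ : α q ≠ α m := fun h => hqm (hα h)
  have hd : 0 < Complex.abs (α p - α q) := Complex.abs.pos (sub_ne_zero.mpr hβγ)
  have hR : 0 < Complex.abs (α p - α m) := Complex.abs.pos (sub_ne_zero.mpr hβμ)
  have he : 0 < Complex.abs (α q - α m) := Complex.abs.pos (sub_ne_zero.mpr hγμ)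
  have hRed : Complex.abs (α p - α m)
      ≤ Complex.abs (α q - α m) + Complex.abs (α p - α q) := by
    have h1 := tri (α p) (α m) (α q)
    linarith
  have heRd : Complex.abs (α q - α m)
      ≤ Complex.abs (α p - α m) + Complex.abs (α p - α q) := by
    have h1 := tri (α q) (α m) (α p)
    have h2 := absc (α q) (α p)
    linarith
  set S := ∑ i : Fin 4, ∑ j, |(δ i j : ℝ)| with hS
  have hS0 : 0 ≤ S :=
    Finset.sum_nonneg fun _ _ => Finset.sum_nonneg fun _ _ => abs_nonneg _
  have hbnd : ∀ (i : Fin 4) (j : Fin n), |(δ i j : ℝ)| ≤ S := by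
    intro i j
    have h1 : |(δ i j : ℝ)| ≤ ∑ j', |(δ i j' : ℝ)| :=
      Finset.single_le_sum (f := fun j' => |(δ i j' : ℝ)|)
        (fun k _ => abs_nonneg _) (Finset.mem_univ j)
    have h2 : ∑ j', |(δ i j' : ℝ)| ≤ S := by
      rw [hS]
      exact Finset.single_le_sum (f := fun i' => ∑ j', |(δ i' j' : ℝ)|)
        (fun k _ => Finset.sum_nonneg fun _ _ => abs_nonneg _) (Finset.mem_univ i)
    linarith
  set G : ℝ → ℝ → ℝ → Fin n → ℝ := fun gp gq gm j =>
    Real.log (Complex.abs (κ j)) - ((δ p.castSucc j : ℝ) * gp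
      + (δ q.castSucc j : ℝ) * gq + (δ m.castSucc j : ℝ) * gm) with hG
  have hδ3 : ∀ j, (δ 3 j : ℝ)
      = -((δ p.castSucc j : ℝ) + (δ q.castSucc j : ℝ) + (δ m.castSucc j : ℝ)) := by
    intro j
    have h0 : δ 0 j + δ 1 j + δ 2 j + δ 3 j = 0 := by
      have := congrFun hΔ j
      simpa using this
    have hs : δ (0:Fin 3).castSucc j + δ (1:Fin 3).castSucc j + δ (2:Fin 3).castSucc j
        = δ p.castSucc j + δ q.castSucc j + δ m.castSucc j := by
      simpa [Fin.sum_univ_three] using sum3 hpq hpm hqm (fun i => δ i.castSucc j)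
    have c0 : (0 : Fin 3).castSucc = (0 : Fin 4) := rfl
    have c1 : (1 : Fin 3).castSucc = (1 : Fin 4) := rfl
    have c2 : (2 : Fin 3).castSucc = (2 : Fin 4) := rfl
    rw [c0, c1, c2] at hs
    have hz : δ 3 j = -(δ p.castSucc j + δ q.castSucc j + δ m.castSucc j) := by omega
    rw [hz]
    push_cast
    ring
  set v : Fin n → ℝ := G (Real.log (Complex.abs (α p - α m)))
    (Real.log (Complex.abs (α p - α m))) (Real.log (Complex.abs (α p - α m))) with hv
  have eq1 : ∀ t : ℝ, v + t • intCast (δ m.castSucc)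
      = G (Real.log (Complex.abs (α p - α m))) (Real.log (Complex.abs (α p - α m)))
          (Real.log (Complex.abs (α p - α m)) - t) := by
    intro t; funext j
    simp only [hv, hG, Pi.add_apply, Pi.smul_apply, smul_eq_mul, intCast]
    ring
  have eq2 : ∀ t : ℝ, v + t • intCast (δ 3)
      = G (Real.log (Complex.abs (α p - α m)) + t) (Real.log (Complex.abs (α p - α m)) + t)
          (Real.log (Complex.abs (α p - α m)) + t) := by
    intro t; funext j
    simp only [hv, hG, Pi.add_apply, Pi.smul_apply, smul_eq_mul, intCast]
    rw [hδ3 j]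
    ring
  have eq3 : ∀ t : ℝ, v + t • intCast (δ p.castSucc + δ q.castSucc)
      = G (Real.log (Complex.abs (α p - α m)) - t) (Real.log (Complex.abs (α p - α m)) - t)
          (Real.log (Complex.abs (α p - α m))) := by
    intro t; funext j
    simp only [hv, hG, Pi.add_apply, Pi.smul_apply, smul_eq_mul, intCast, Int.cast_add]
    ring
  have eq4 : ∀ t : ℝ, (v + (Real.log (Complex.abs (α p - α m))
        - Real.log (Complex.abs (α p - α q))) • intCast (δ p.castSucc + δ q.castSucc))
        + t • intCast (δ p.castSucc)
      = G (Real.log (Complex.abs (α p - α q)) - t) (Real.log (Complex.abs (α p - α q)))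
          (Real.log (Complex.abs (α p - α m))) := by
    intro t; funext j
    simp only [hv, hG, Pi.add_apply, Pi.smul_apply, smul_eq_mul, intCast, Int.cast_add]
    ring
  have eq5 : ∀ t : ℝ, (v + (Real.log (Complex.abs (α p - α m))
        - Real.log (Complex.abs (α p - α q))) • intCast (δ p.castSucc + δ q.castSucc))
        + t • intCast (δ q.castSucc)
      = G (Real.log (Complex.abs (α p - α q))) (Real.log (Complex.abs (α p - α q)) - t)
          (Real.log (Complex.abs (α p - α m))) := by
    intro t; funext j
    simp only [hv, hG, Pi.add_apply, Pi.smul_apply, smul_eq_mul, intCast, Int.cast_add]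
    ring
  have hl0 : 0 ≤ Real.log (Complex.abs (α p - α m)) - Real.log (Complex.abs (α p - α q)) := by
    have := Real.log_le_log hd hmin1
    linarith
  have hamoeba : ∀ z : ℂ, (∀ i, z ≠ α i) →
      LogMap ((fun z : ℂ => fun j : Fin n =>
          κ j * ∏ i : Fin 3, (z - α i) ^ (-(δ i.castSucc j))) z)
        = G (Real.log (Complex.abs (z - α p))) (Real.log (Complex.abs (z - α q)))
            (Real.log (Complex.abs (z - α m))) := by
    intro z hz; funext j
    have h1 : LogMap ((fun z : ℂ => fun j : Fin n =>
        κ j * ∏ i : Fin 3, (z - α i) ^ (-(δ i.castSucc j))) z) j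
        = Real.log (Complex.abs (κ j * ∏ i : Fin 3, (z - α i) ^ (-(δ i.castSucc j)))) := rfl
    rw [h1, log_expand κ hκ δ α z hz j,
      sum3 hpq hpm hqm (fun i => (-(δ i.castSucc j) : ℝ) * Real.log (Complex.abs (z - α i)))]
    simp only [hG]
    push_cast
    ring
  have hclose : ∀ x1 x2 x3 y1 y2 y3 : ℝ, |x1 - y1| ≤ 3 → |x2 - y2| ≤ 3 → |x3 - y3| ≤ 3 →
      ‖G x1 x2 x3 - G y1 y2 y3‖ < 9 * S + 1 := by
    intro x1 x2 x3 y1 y2 y3 h1 h2 h3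
    rw [pi_norm_lt_iff (by linarith)]
    intro j
    have hj : (G x1 x2 x3 - G y1 y2 y3) j
        = (δ p.castSucc j : ℝ) * (y1 - x1) + (δ q.castSucc j : ℝ) * (y2 - x2)
          + (δ m.castSucc j : ℝ) * (y3 - x3) := by
      simp only [hG, Pi.sub_apply]; ring
    rw [Real.norm_eq_abs, hj]
    have e1 : |(δ p.castSucc j : ℝ) * (y1 - x1)| ≤ S * 3 := by
      rw [abs_mul]
      exact mul_le_mul (hbnd _ _) (by rwa [abs_sub_comm]) (abs_nonneg _) hS0
    have e2 : |(δ q.castSucc j : ℝ) * (y2 - x2)| ≤ S * 3 := by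
      rw [abs_mul]
      exact mul_le_mul (hbnd _ _) (by rwa [abs_sub_comm]) (abs_nonneg _) hS0
    have e3 : |(δ m.castSucc j : ℝ) * (y3 - x3)| ≤ S * 3 := by
      rw [abs_mul]
      exact mul_le_mul (hbnd _ _) (by rwa [abs_sub_comm]) (abs_nonneg _) hS0
    have a1 := abs_add_le ((δ p.castSucc j : ℝ) * (y1 - x1) + (δ q.castSucc j : ℝ) * (y2 - x2))
      ((δ m.castSucc j : ℝ) * (y3 - x3))
    have a2 := abs_add_le ((δ p.castSucc j : ℝ) * (y1 - x1)) ((δ q.castSucc j : ℝ) * (y2 - x2))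
    linarith
  have hlast : ∀ x : Fin 3, x.castSucc ≠ (3 : Fin 4) := by
    intro x h
    have := Fin.castSucc_lt_last x
    rw [h] at this
    exact absurd this (by decide)
  refine ⟨v, Real.log (Complex.abs (α p - α m)) - Real.log (Complex.abs (α p - α q)),
    m.castSucc, 3, p.castSucc, q.castSucc, hl0,
    hlast m,
    fun h => hpm (Fin.castSucc_injective _ h).symm,
    fun h => hqm (Fin.castSucc_injective _ h).symm,
    Ne.symm (hlast p),
    Ne.symm (hlast q),
    fun h => hpq (Fin.castSucc_injective _ h),
    ?_, ?_⟩
  · -- amoeba ⊆ nbhd of tropical curve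
    intro x hx
    obtain ⟨y, ⟨z, hzS, rfl⟩, rfl⟩ := hx
    have hz : ∀ i, z ≠ α i := hzS
    have hrp : 0 < Complex.abs (z - α p) := Complex.abs.pos (sub_ne_zero.mpr (hz p))
    have hrq : 0 < Complex.abs (z - α q) := Complex.abs.pos (sub_ne_zero.mpr (hz q))
    have hrm : 0 < Complex.abs (z - α m) := Complex.abs.pos (sub_ne_zero.mpr (hz m))
    have t1 : Complex.abs (z - α p) ≤ Complex.abs (z - α q) + Complex.abs (α p - α q) := by
      have ha := tri z (α p) (α q)
      have hb := absc (α q) (α p)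
      linarith
    have t2 : Complex.abs (z - α q) ≤ Complex.abs (z - α p) + Complex.abs (α p - α q) :=
      tri z (α q) (α p)
    have t3 : Complex.abs (α p - α q) ≤ Complex.abs (z - α p) + Complex.abs (z - α q) := by
      have ha := tri (α p) (α q) z
      have hb := absc (α p) z
      linarith
    have t4 : Complex.abs (z - α p) ≤ Complex.abs (z - α m) + Complex.abs (α p - α m) := by
      have ha := tri z (α p) (α m)
      have hb := absc (α m) (α p)
      linarith
    have t5 : Complex.abs (z - α m) ≤ Complex.abs (z - α p) + Complex.abs (α p - α m) :=
      tri z (α m) (α p)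
    have t6 : Complex.abs (α p - α m) ≤ Complex.abs (z - α p) + Complex.abs (z - α m) := by
      have ha := tri (α p) (α m) z
      have hb := absc (α p) z
      linarith
    have t7 : Complex.abs (z - α q) ≤ Complex.abs (z - α m) + Complex.abs (α q - α m) := by
      have ha := tri z (α q) (α m)
      have hb := absc (α m) (α q)
      linarith
    have t8 : Complex.abs (z - α m) ≤ Complex.abs (z - α q) + Complex.abs (α q - α m) :=
      tri z (α m) (α q)
    have t9 : Complex.abs (α q - α m) ≤ Complex.abs (z - α q) + Complex.abs (z - α m) := by
      have ha := tri (α q) (α m) z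
      have hb := absc (α q) z
      linarith
    obtain ⟨gp, gq, gm, hpiece, b1, b2, b3⟩ :=
      fwd_real hd hR he hmin1 hmin2 heRd hRed hrp hrq hrm t1 t2 t3 t4 t5 t6 t7 t8 t9
    rw [hamoeba z hz]
    rcases hpiece with ⟨t, ht, rfl, rfl, rfl⟩ | ⟨t, ht, rfl, rfl, rfl⟩ |
      ⟨t, ht, htl, rfl, rfl, rfl⟩ | ⟨t, ht, rfl, rfl, rfl⟩ | ⟨t, ht, rfl, rfl, rfl⟩
    · refine ⟨G _ _ _, ?_, hclose _ _ _ _ _ _ b1 b2 b3⟩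
      simp only [fourEndCurve, Set.mem_union, ray, seg, Set.mem_setOf_eq]
      exact Or.inl (Or.inl (Or.inl (Or.inl ⟨t, ht, (eq1 t).symm⟩)))
    · refine ⟨G _ _ _, ?_, hclose _ _ _ _ _ _ b1 b2 b3⟩
      simp only [fourEndCurve, Set.mem_union, ray, seg, Set.mem_setOf_eq]
      exact Or.inl (Or.inl (Or.inl (Or.inr ⟨t, ht, (eq2 t).symm⟩)))
    · refine ⟨G _ _ _, ?_, hclose _ _ _ _ _ _ b1 b2 b3⟩
      simp only [fourEndCurve, Set.mem_union, ray, seg, Set.mem_setOf_eq]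
      exact Or.inl (Or.inl (Or.inr ⟨t, ht, htl, (eq3 t).symm⟩))
    · refine ⟨G _ _ _, ?_, hclose _ _ _ _ _ _ b1 b2 b3⟩
      simp only [fourEndCurve, Set.mem_union, ray, seg, Set.mem_setOf_eq]
      exact Or.inl (Or.inr ⟨t, ht, (eq4 t).symm⟩)
    · refine ⟨G _ _ _, ?_, hclose _ _ _ _ _ _ b1 b2 b3⟩
      simp only [fourEndCurve, Set.mem_union, ray, seg, Set.mem_setOf_eq]
      exact Or.inr ⟨t, ht, (eq5 t).symm⟩
  · -- tropical curve ⊆ nbhd of amoeba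
    intro x hx
    simp only [fourEndCurve, Set.mem_union, ray, seg, Set.mem_setOf_eq] at hx
    have hget : ∃ g1 g2 g3, x = G g1 g2 g3 ∧
        PieceSpec (Complex.abs (α p - α q)) (Complex.abs (α p - α m)) g1 g2 g3 := by
      rcases hx with ((((⟨t, ht, rfl⟩ | ⟨t, ht, rfl⟩) | ⟨t, ht, htl, rfl⟩) |
        ⟨t, ht, rfl⟩) | ⟨t, ht, rfl⟩)
      · exact ⟨_, _, _, eq1 t, Or.inl ⟨t, ht, rfl, rfl, rfl⟩⟩
      · exact ⟨_, _, _, eq2 t, Or.inr (Or.inl ⟨t, ht, rfl, rfl, rfl⟩)⟩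
      · exact ⟨_, _, _, eq3 t, Or.inr (Or.inr (Or.inl ⟨t, ht, htl, rfl, rfl, rfl⟩))⟩
      · exact ⟨_, _, _, eq4 t, Or.inr (Or.inr (Or.inr (Or.inl ⟨t, ht, rfl, rfl, rfl⟩)))⟩
      · exact ⟨_, _, _, eq5 t, Or.inr (Or.inr (Or.inr (Or.inr ⟨t, ht, rfl, rfl, rfl⟩)))⟩
    obtain ⟨g1, g2, g3, hxeq, hpiece⟩ := hget
    obtain ⟨z, hzβ, hzγ, hzμ, b1, b2, b3⟩ :=
      bwd_real (α p) (α q) (α m) hβγ hβμ hγμ hmin1 hmin2 g1 g2 g3 hpiece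
    have hz : ∀ i, z ≠ α i := by
      intro i
      rcases mem3 hpq hpm hqm i with rfl | rfl | rfl <;> assumption
    refine ⟨LogMap ((fun z : ℂ => fun j : Fin n =>
        κ j * ∏ i : Fin 3, (z - α i) ^ (-(δ i.castSucc j))) z),
      ⟨_, ⟨z, hz, rfl⟩, rfl⟩, ?_⟩
    rw [hxeq, hamoeba z hz]
    exact hclose _ _ _ _ _ _ (by rw [abs_sub_comm]; exact b1)
      (by rw [abs_sub_comm]; exact b2) (by rw [abs_sub_comm]; exact b3)

/-- For any toric degree `Δ = (δ₁, δ₂, δ₃, δ₄)` with `∑ δᵢ = 0` there is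
a constant `ε ≥ 0` such that the amoeba of any complex rational curve of toric degree `Δ`
is within `ε` (sup norm) of the image of some tropical rational curve of degree `Δ`
(two vertices joined by a bounded edge, with two rays at each vertex), and vice versa. -/
theorem stmt_1 (n : ℕ) (hn : 1 ≤ n) (δ : Fin 4 → Fin n → ℤ)
    (hΔ : δ 0 + δ 1 + δ 2 + δ 3 = 0) :
    ∃ ε : ℝ, 0 ≤ ε ∧
      ∀ α : Fin 3 → ℂ, Function.Injective α →
      ∀ κ : Fin n → ℂ, (∀ j, κ j ≠ 0) →
      ∃ (v : Fin n → ℝ) (l : ℝ) (a b c d : Fin 4),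
        0 ≤ l ∧
        a ≠ b ∧ a ≠ c ∧ a ≠ d ∧ b ≠ c ∧ b ≠ d ∧ c ≠ d ∧
        LogMap '' ((fun z : ℂ => fun j : Fin n =>
              κ j * ∏ i : Fin 3, (z - α i) ^ (-(δ i.castSucc j))) ''
            {z : ℂ | ∀ i, z ≠ α i})
          ⊆ nbhd ε (fourEndCurve δ a b c d v l) ∧
        fourEndCurve δ a b c d v l
          ⊆ nbhd ε (LogMap '' ((fun z : ℂ => fun j : Fin n =>
              κ j * ∏ i : Fin 3, (z - α i) ^ (-(δ i.castSucc j))) ''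
            {z : ℂ | ∀ i, z ≠ α i})) := by
  refine ⟨9 * (∑ i : Fin 4, ∑ j, |(δ i j : ℝ)|) + 1, by positivity, ?_⟩
  intro α hα κ hκ
  rcases le_total (Complex.abs (α 0 - α 1)) (Complex.abs (α 0 - α 2)) with h1 | h1
  · rcases le_total (Complex.abs (α 0 - α 1)) (Complex.abs (α 1 - α 2)) with h2 | h2
    · exact main_aux δ hΔ 0 1 2 (by decide) (by decide) (by decide) α hα h1 h2 κ hκ
    · rcases le_total (Complex.abs (α 0 - α 2)) (Complex.abs (α 1 - α 2)) with h3 | h3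
      · exact main_aux δ hΔ 0 2 1 (by decide) (by decide) (by decide) α hα (h3.trans h2)
          (by rw [absc (α 2) (α 1)]; exact h3) κ hκ
      · exact main_aux δ hΔ 1 2 0 (by decide) (by decide) (by decide) α hα
          (by rw [absc (α 1) (α 0)]; exact h2) (by rw [absc (α 2) (α 0)]; exact h3) κ hκ
  · rcases le_total (Complex.abs (α 0 - α 2)) (Complex.abs (α 1 - α 2)) with h3 | h3
    · exact main_aux δ hΔ 0 2 1 (by decide) (by decide) (by decide) α hα h1
        (by rw [absc (α 2) (α 1)]; exact h3) κ hκ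
    · exact main_aux δ hΔ 1 2 0 (by decide) (by decide) (by decide) α hα
        (by rw [absc (α 1) (α 0)]; exact (h3.trans h1))
        (by rw [absc (α 2) (α 0)]; exact h3) κ hκ
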